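/- With G : ([0,1]²)^ℤ → C_b(ℝ, ℂ) defined as G(a)(t) = (1/(2K)) Σ_{n∈ℤ} (a_{1,n} + i a_{2,n}) f(t−n), where |f(t)| ≤ C/(1+t²) and K = sup_t Σ_n C/(1+(t−n)²), the map G is continuous from the product topology on ([0,1]²)^ℤ to the topology of uniform convergence on compact subsets of ℝ. -/

import Mathlib

open Set Filter

/-- Summability of `n ↦ 1/(1+n²)` over `ℤ`. -/
lemma stmt15_summable_aux : Summable (fun n : ℤ => 1 / (1 + (n : ℝ) ^ 2)) := by
  apply Summable.of_norm_bounded_eventually (g := fun n : ℤ => 1 / (n : ℝ) ^ 2)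
    ((Real.summable_one_div_int_pow (p := 2)).mpr one_lt_two)
  have : {n : ℤ | ¬ ‖1 / (1 + (n : ℝ) ^ 2)‖ ≤ 1 / (n : ℝ) ^ 2} ⊆ {0} := by
    intro n hn
    simp only [mem_setOf_eq, not_le] at hn
    by_contra h0
    have hne : (n : ℝ) ≠ 0 := Int.cast_ne_zero.mpr h0
    have h1 : (0:ℝ) < (n:ℝ) ^ 2 := by positivity
    have h2 : (0:ℝ) < 1 + (n:ℝ) ^ 2 := by positivity
    have : ‖1 / (1 + (n : ℝ) ^ 2)‖ = 1 / (1 + (n:ℝ)^2) := by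
      rw [Real.norm_eq_abs, abs_of_pos (by positivity)]
    rw [this] at hn
    have : 1 / (1 + (n:ℝ)^2) ≤ 1 / (n:ℝ)^2 :=
      one_div_le_one_div_of_le h1 (by linarith)
    linarith
  rw [Filter.eventually_cofinite]
  exact (Set.finite_singleton 0).subset this

/-- With `G(a)(t) = (1/(2K)) ∑_{n ∈ ℤ} (a_{1,n} + i a_{2,n}) f(t - n)`, where
`|f(t)| ≤ C/(1+t²)` and `K ≥ sup_t ∑_n C/(1+(t-n)²) > 0`, the map `G` is
continuous from `([0,1]²)^ℤ` with the product topology to `C(ℝ, ℂ)` with the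
topology of uniform convergence on compact sets. -/
theorem stmt_15 (f : ℝ → ℝ) (hfc : Continuous f)
    (C : ℝ) (hC : 0 < C) (hfb : ∀ t : ℝ, |f t| ≤ C / (1 + t ^ 2))
    (K : ℝ) (hKpos : 0 < K)
    (hK : ∀ t : ℝ, ∑' n : ℤ, C / (1 + (t - n) ^ 2) ≤ K) :
    ∃ G : {a : ℤ → ℝ × ℝ // ∀ n, (a n).1 ∈ Set.Icc (0:ℝ) 1 ∧
        (a n).2 ∈ Set.Icc (0:ℝ) 1} → C(ℝ, ℂ),
      (∀ a t, G a t =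
        (1 / (2 * K)) * ∑' n : ℤ,
          (((a.1 n).1 : ℂ) + ((a.1 n).2 : ℂ) * Complex.I) * (f (t - n) : ℝ)) ∧
      Continuous G := by
  set X := {a : ℤ → ℝ × ℝ // ∀ n, (a n).1 ∈ Set.Icc (0:ℝ) 1 ∧
      (a n).2 ∈ Set.Icc (0:ℝ) 1} with hX
  -- the individual terms of the series, as functions of (a, t)
  set g : ℤ → X × ℝ → ℂ := fun n p =>
    (((p.1.1 n).1 : ℂ) + ((p.1.1 n).2 : ℂ) * Complex.I) * (f (p.2 - n) : ℝ) with hg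
  have hgcont : ∀ n, Continuous (g n) := by
    intro n
    have h1 : Continuous fun p : X × ℝ => p.1.1 n :=
      (continuous_apply n).comp (continuous_subtype_val.comp continuous_fst)
    fun_prop
  -- pointwise bound on the terms
  have hgbound : ∀ (n : ℤ) (p : X × ℝ), ‖g n p‖ ≤ 2 * (C / (1 + (p.2 - n) ^ 2)) := by
    intro n p
    have hc : ‖(((p.1.1 n).1 : ℂ) + ((p.1.1 n).2 : ℂ) * Complex.I)‖ ≤ 2 := by
      have h1 := (p.1.2 n).1
      have h2 := (p.1.2 n).2
      simp only [mem_Icc] at h1 h2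
      calc ‖(((p.1.1 n).1 : ℂ) + ((p.1.1 n).2 : ℂ) * Complex.I)‖
          ≤ ‖(((p.1.1 n).1 : ℂ))‖ + ‖((p.1.1 n).2 : ℂ) * Complex.I‖ := norm_add_le _ _
        _ = |(p.1.1 n).1| + |(p.1.1 n).2| := by
            simp [Complex.norm_real, norm_mul]
        _ ≤ 1 + 1 := by
            rw [abs_of_nonneg h1.1, abs_of_nonneg h2.1]; exact add_le_add h1.2 h2.2
        _ = 2 := by norm_num
    have hf : ‖((f (p.2 - n) : ℝ) : ℂ)‖ ≤ C / (1 + (p.2 - n) ^ 2) := by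
      rw [Complex.norm_real, Real.norm_eq_abs]; exact hfb _
    calc ‖g n p‖ = ‖(((p.1.1 n).1 : ℂ) + ((p.1.1 n).2 : ℂ) * Complex.I)‖ *
          ‖((f (p.2 - n) : ℝ) : ℂ)‖ := norm_mul _ _
      _ ≤ 2 * (C / (1 + (p.2 - n) ^ 2)) :=
          mul_le_mul hc hf (norm_nonneg _) (by norm_num)
  -- continuity of the sum
  have hScont : Continuous fun p : X × ℝ => ∑' n : ℤ, g n p := by
    rw [continuous_iff_continuousAt]
    intro p
    set N : ℝ := |p.2| + 1 with hN
    have hpmem : p ∈ (univ : Set X) ×ˢ Ioo (-N) N := by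
      constructor
      · trivial
      · constructor
        · simp only [hN]; cases abs_cases p.2 with
          | inl h => linarith [h.1]
          | inr h => linarith [h.1]
        · simp only [hN]; cases abs_cases p.2 with
          | inl h => linarith [h.1]
          | inr h => linarith [h.1]
    have hopen : IsOpen ((univ : Set X) ×ˢ Ioo (-N) N) := isOpen_univ.prod isOpen_Ioo
    refine ContinuousOn.continuousAt ?_ (hopen.mem_nhds hpmem)
    refine continuousOn_tsum (fun n => (hgcont n).continuousOn)
      ((stmt15_summable_aux.mul_left (2 * (C * (2 * (1 + N ^ 2)))))) ?_
    intro n q hq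
    obtain ⟨-, hq2⟩ := hq
    simp only [mem_Ioo] at hq2
    have ht2 : q.2 ^ 2 ≤ N ^ 2 := by nlinarith [hq2.1, hq2.2]
    have hd1 : (0:ℝ) < 1 + (q.2 - n) ^ 2 := by positivity
    have hd2 : (0:ℝ) < 1 + (n:ℝ) ^ 2 := by positivity
    have key : C / (1 + (q.2 - n) ^ 2) ≤ C * (2 * (1 + N ^ 2)) * (1 / (1 + (n:ℝ)^2)) := by
      rw [mul_one_div, div_le_div_iff₀ hd1 hd2]
      have hlin : 1 + (n:ℝ) ^ 2 ≤ 2 * (1 + N ^ 2) * (1 + (q.2 - n) ^ 2) := by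
        nlinarith [sq_nonneg (2 * q.2 - n), sq_nonneg (q.2 - (n:ℝ)),
          mul_nonneg (sq_nonneg N) (sq_nonneg (q.2 - (n:ℝ))), ht2]
      nlinarith [mul_le_mul_of_nonneg_left hlin hC.le]
    calc ‖g n q‖ ≤ 2 * (C / (1 + (q.2 - n) ^ 2)) := hgbound n q
      _ ≤ 2 * (C * (2 * (1 + N ^ 2)) * (1 / (1 + (n:ℝ)^2))) := by
          linarith [key]
      _ = 2 * (C * (2 * (1 + N ^ 2))) * (1 / (1 + (n:ℝ)^2)) := by ring
  -- assemble
  have hHcont : Continuous fun p : X × ℝ =>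
      (1 / (2 * K) : ℂ) * ∑' n : ℤ, g n p := continuous_const.mul hScont
  refine ⟨fun a => (ContinuousMap.curry ⟨_, hHcont⟩) a, ?_, ?_⟩
  · intro a t
    show (1 / (2 * K) : ℂ) * ∑' n : ℤ, g n (a, t) = _
    push_cast
    rfl
  · exact (ContinuousMap.curry ⟨_, hHcont⟩).continuous
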